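/- Let α > 0 and let e, d be real numbers with 0 < e ≤ d < α and d ≤ 2α·arcsin(e/(2α)). Then d/e − 1 ≤ e/(3√3·α). -/

import Mathlib

set_option maxHeartbeats 1000000


/-- Let `α > 0` and let `e, d` be real numbers with `0 < e ≤ d < α` and
`d ≤ 2α·arcsin(e/(2α))`. Then `d/e − 1 ≤ e/(3√3·α)`. -/
theorem ratio_sub_one_le (α e d : ℝ) (hα : 0 < α) (he : 0 < e) (hed : e ≤ d)
    (hdα : d < α) (h : d ≤ 2 * α * Real.arcsin (e / (2 * α))) :
    d / e - 1 ≤ e / (3 * Real.sqrt 3 * α) := by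
  have h2α : (0:ℝ) < 2 * α := by linarith
  set t := d / (2 * α) with htdef
  clear_value t
  have ht0 : 0 < t := by rw [htdef]; exact div_pos (lt_of_lt_of_le he hed) h2α
  have ht2 : t < 1/2 := by
    rw [htdef, div_lt_iff₀ h2α]; linarith
  have hsq3 : (0:ℝ) < Real.sqrt 3 := Real.sqrt_pos.mpr (by norm_num)
  have hsq3le : Real.sqrt 3 ≤ 2 := by
    nlinarith [Real.sq_sqrt (show (0:ℝ) ≤ 3 by norm_num)]
  have hy1 : e / (2 * α) ≤ 1 := by
    rw [div_le_one h2α]; linarith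
  have hy0 : -1 ≤ e / (2 * α) := by
    have : 0 ≤ e / (2 * α) := le_of_lt (div_pos he h2α)
    linarith
  have harcsin : t ≤ Real.arcsin (e / (2 * α)) := by
    rw [htdef, div_le_iff₀ h2α]; linarith
  have hpi : (3:ℝ) < Real.pi := Real.pi_gt_three
  have hsin : Real.sin t ≤ e / (2 * α) := by
    have h1 : Real.sin t ≤ Real.sin (Real.arcsin (e / (2 * α))) := by
      apply Real.strictMonoOn_sin.monotoneOn ?_ ?_ harcsin
      · exact Set.mem_Icc.mpr ⟨by nlinarith, by nlinarith⟩
      · exact ⟨Real.neg_pi_div_two_le_arcsin _, Real.arcsin_le_pi_div_two _⟩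
    rwa [Real.sin_arcsin hy0 hy1] at h1
  have hes : 2 * α * Real.sin t ≤ e := by
    have := (le_div_iff₀ h2α).mp hsin
    linarith
  set s := Real.sin t with hsdef
  clear_value s
  have hs0 : 0 < s := by rw [hsdef]; exact Real.sin_pos_of_pos_of_lt_pi ht0 (by linarith)
  have hst : s ≤ t := by rw [hsdef]; exact le_of_lt (Real.sin_lt ht0)
  have hcube : t - t^3/4 < s := by rw [hsdef]; have := Real.sin_gt_sub_cube ht0; linarith [pow_pos ht0 3]
  have hslb : 15/16 * t ≤ s := by
    nlinarith [mul_nonneg (mul_nonneg ht0.le (by linarith : (0:ℝ) ≤ 1/2 - t)) (by linarith : (0:ℝ) ≤ 1/2 + t)]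
  have hd : d = 2 * α * t := by rw [htdef]; field_simp
  have hkey : (d - e) * (3 * Real.sqrt 3 * α) ≤ e * e := by
    have h1 : (d - e) * (3 * Real.sqrt 3 * α) ≤ (2*α*t - 2*α*s) * (3 * Real.sqrt 3 * α) := by
      apply mul_le_mul_of_nonneg_right _ (by positivity)
      linarith
    have hts0 : 0 ≤ t - s := by linarith
    have hts : t - s ≤ t^3/4 := by linarith
    have h2 : (2*α*t - 2*α*s) * (3 * Real.sqrt 3 * α) ≤ 2*α*(t^3/4) * (6 * α) := by
      nlinarith [mul_nonneg (sq_nonneg α) (mul_nonneg (by linarith : (0:ℝ) ≤ 2 - Real.sqrt 3) hts0),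
        mul_nonneg (sq_nonneg α) (by linarith : (0:ℝ) ≤ t^3/4 - (t - s))]
    have h3 : 2*α*(t^3/4) * (6 * α) ≤ 4*α^2 * (15/16*t)^2 := by
      nlinarith [mul_nonneg (mul_nonneg (sq_nonneg α) (sq_nonneg t)) (by linarith : (0:ℝ) ≤ 1/2 - t),
        mul_nonneg (sq_nonneg α) (sq_nonneg t)]
    have h4 : 4*α^2 * (15/16*t)^2 ≤ e * e := by
      have hle : 2*α*(15/16*t) ≤ e := by
        have := mul_le_mul_of_nonneg_left hslb h2α.le
        linarith
      have h5 : (2*α*(15/16*t)) * (2*α*(15/16*t)) ≤ e * e :=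
        mul_le_mul hle hle (by positivity) he.le
      calc 4*α^2 * (15/16*t)^2 = (2*α*(15/16*t)) * (2*α*(15/16*t)) := by ring
        _ ≤ e * e := h5
    linarith
  rw [div_sub_one (ne_of_gt he), div_le_div_iff₀ he (by positivity)]
  linarith
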